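/- Let U be a finite set with |U| = k ≥ 1, let S₁,…,S_s be subsets of U, and let ℓ ≥ 1 be an integer. Let (G,w) be the weighted split graph whose vertex set is the disjoint union of {1,…,s} (set-vertices) and U (element-vertices), where the set-vertices are pairwise adjacent, the element-vertices are pairwise non-adjacent, and a set-vertex i is adjacent to an element-vertex x if and only if x ∉ S_i; every set-vertex has weight ℓ and every element-vertex has weight ℓ+1. Then there exists a subfamily of at most ℓ of the sets S₁,…,S_s whose union is U if and only if σ(G,w) ≤ s·ℓ + ℓ. -/

import Mathlib

open Finset

/-- A finset of vertices is independent (stable) in `G`. -/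
def IndepSet {V : Type*} (G : SimpleGraph V) (S : Finset V) : Prop :=
  ∀ u ∈ S, ∀ v ∈ S, ¬ G.Adj u v

/-- A proper coloring of the subgraph of `G` induced by `A`:
a partition of `A` into independent sets (the color classes). -/
def IsProperColoring {V : Type*} [DecidableEq V] (G : SimpleGraph V) {A : Finset V}
    (P : Finpartition A) : Prop :=
  ∀ S ∈ P.parts, IndepSet G S

/-- The weight of a coloring: the sum over color classes of the maximum weight in the class. -/
def colWeight {V : Type*} [DecidableEq V] {A : Finset V} (w : V → ℕ) (P : Finpartition A) : ℕ :=
  ∑ S ∈ P.parts, S.sup w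

/-- The weighted chromatic number of the subgraph of `G` induced by the vertex set `A`. -/
noncomputable def sigmaOn {V : Type*} [DecidableEq V] (G : SimpleGraph V) (w : V → ℕ)
    (A : Finset V) : ℕ :=
  sInf { n | ∃ P : Finpartition A, IsProperColoring G P ∧ n = colWeight w P }

/-- The weighted chromatic number `σ(G,w)`. -/
noncomputable def sigmaW {V : Type*} [Fintype V] [DecidableEq V] (G : SimpleGraph V)
    (w : V → ℕ) : ℕ :=
  sigmaOn G w Finset.univ

/-- An antimatching of `G`: a set of pairwise disjoint unordered pairs of distinct
non-adjacent vertices of `G` (equivalently, a matching of the complement of `G`). -/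
def IsAntimatching {V : Type*} (G : SimpleGraph V) (M : Finset (Sym2 V)) : Prop :=
  (∀ e ∈ M, e ∈ Gᶜ.edgeSet) ∧
  ∀ e ∈ M, ∀ f ∈ M, e ≠ f → ∀ x, x ∈ e → x ∉ f

/-- A maximum antimatching of `G`. -/
def IsMaxAntimatching {V : Type*} (G : SimpleGraph V) (M : Finset (Sym2 V)) : Prop :=
  IsAntimatching G M ∧ ∀ M' : Finset (Sym2 V), IsAntimatching G M' → M'.card ≤ M.card

/-- The set `V(M̄)` of vertices covered by the pairs of `M`. -/
def coveredVerts {V : Type*} [Fintype V] [DecidableEq V] (M : Finset (Sym2 V)) : Finset V :=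
  Finset.univ.filter fun v => ∃ e ∈ M, v ∈ e

/-- `G` is an interval graph: vertices can be assigned nonempty closed real intervals so that
two distinct vertices are adjacent iff their intervals intersect. -/
def IsIntervalGraph {V : Type*} (G : SimpleGraph V) : Prop :=
  ∃ f : V → ℝ × ℝ, (∀ v, (f v).1 ≤ (f v).2) ∧
    ∀ u v : V, G.Adj u v ↔
      u ≠ v ∧ (Set.Icc (f u).1 (f u).2 ∩ Set.Icc (f v).1 (f v).2).Nonempty

/-- Partition of `univ` into the fibers of a surjective function. -/
def fiberPart {V I : Type*} [Fintype V] [DecidableEq V] [Fintype I] [DecidableEq I]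
    (f : V → I) (hf : Function.Surjective f) : Finpartition (univ : Finset V) where
  parts := univ.image fun i => univ.filter fun v => f v = i
  supIndep := by
    rw [Finset.supIndep_iff_pairwiseDisjoint]
    rintro t ht u hu htu
    simp only [coe_image, Set.mem_image] at ht hu
    obtain ⟨i, -, rfl⟩ := ht
    obtain ⟨j, -, rfl⟩ := hu
    have hij : i ≠ j := fun h => htu (by rw [h])
    simp only [Finset.disjoint_left, id, mem_filter]
    rintro v ⟨-, h1⟩ ⟨-, h2⟩
    exact hij (h1 ▸ h2)
  sup_parts := by
    ext v
    simp only [mem_sup, mem_image, mem_univ, true_and, iff_true]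
    exact ⟨_, ⟨f v, rfl⟩, by simp⟩
  bot_notMem := by
    simp only [bot_eq_empty, mem_image, mem_univ, true_and, not_exists]
    intro i h
    obtain ⟨v, rfl⟩ := hf i
    have : v ∈ (univ.filter fun u => f u = f v) := by simp
    rw [h] at this
    exact absurd this (notMem_empty v)

lemma fiberPart_parts {V I : Type*} [Fintype V] [DecidableEq V] [Fintype I] [DecidableEq I]
    (f : V → I) (hf : Function.Surjective f) :
    (fiberPart f hf).parts = univ.image fun i => univ.filter fun v => f v = i := rfl

lemma colWeight_fiberPart {V I : Type*} [Fintype V] [DecidableEq V] [Fintype I] [DecidableEq I]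
    (f : V → I) (hf : Function.Surjective f) (w : V → ℕ) :
    colWeight w (fiberPart f hf) = ∑ i : I, (univ.filter fun v => f v = i).sup w := by
  unfold colWeight
  rw [fiberPart_parts, Finset.sum_image]
  intro i _ j _ h
  obtain ⟨v, rfl⟩ := hf i
  have : v ∈ (univ.filter fun u => f u = j) := by
    have h' : (univ.filter fun u => f u = f v) = univ.filter fun u => f u = j := h
    rw [← h']; simp
  exact (mem_filter.1 this).2

/-- the split graph built from a set-cover instance (set-vertices form a clique
of weight `ℓ`, element-vertices form a stable set of weight `ℓ+1`, a set-vertex is adjacent to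
an element-vertex iff the set does not contain the element) has `σ(G,w) ≤ s·ℓ + ℓ` iff there
is a cover by at most `ℓ` sets. -/
theorem setCover_iff_sigma_le
    {U : Type*} [Fintype U] [DecidableEq U]
    (k : ℕ) (hk : Fintype.card U = k) (hk1 : 1 ≤ k)
    (s : ℕ) (S : Fin s → Finset U)
    (ℓ : ℕ) (hℓ : 1 ≤ ℓ) :
    (∃ F : Finset (Fin s), F.card ≤ ℓ ∧ ∀ x : U, ∃ i ∈ F, x ∈ S i) ↔
      sigmaW
        (SimpleGraph.fromRel fun a b : Fin s ⊕ U =>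
          match a, b with
          | Sum.inl _, Sum.inl _ => True
          | Sum.inl i, Sum.inr x => x ∉ S i
          | _, _ => False)
        (Sum.elim (fun _ => ℓ) fun _ => ℓ + 1) ≤ s * ℓ + ℓ := by
  classical
  set G := (SimpleGraph.fromRel fun a b : Fin s ⊕ U =>
          match a, b with
          | Sum.inl _, Sum.inl _ => True
          | Sum.inl i, Sum.inr x => x ∉ S i
          | _, _ => False) with hG
  set w : Fin s ⊕ U → ℕ := Sum.elim (fun _ => ℓ) fun _ => ℓ + 1 with hw
  have hAdj_ll : ∀ i j : Fin s, G.Adj (Sum.inl i) (Sum.inl j) ↔ i ≠ j := by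
    intro i j
    simp [hG, SimpleGraph.fromRel_adj]
  have hAdj_lr : ∀ (i : Fin s) (x : U), G.Adj (Sum.inl i) (Sum.inr x) ↔ x ∉ S i := by
    intro i x
    simp [hG, SimpleGraph.fromRel_adj]
  have hAdj_rr : ∀ x y : U, ¬ G.Adj (Sum.inr x) (Sum.inr y) := by
    intro x y
    simp [hG, SimpleGraph.fromRel_adj]
  rw [sigmaW, sigmaOn]
  constructor
  · rintro ⟨F, hFcard, hFcov⟩
    choose g hg1 hg2 using hFcov
    set f : Fin s ⊕ U → Fin s := Sum.elim id g with hf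
    have hsurj : Function.Surjective f := fun i => ⟨Sum.inl i, rfl⟩
    set P := fiberPart f hsurj with hP
    have hproper : IsProperColoring G P := by
      intro T hT u hu v hv
      rw [fiberPart_parts] at hT
      simp only [mem_image, mem_univ, true_and] at hT
      obtain ⟨i, rfl⟩ := hT
      simp only [mem_filter, mem_univ, true_and] at hu hv
      match u, v with
      | Sum.inl a, Sum.inl b =>
        simp only [hf, Sum.elim_inl, id] at hu hv
        rw [hAdj_ll]
        simp [hu, hv]
      | Sum.inl a, Sum.inr x =>
        simp only [hf, Sum.elim_inl, Sum.elim_inr, id] at hu hv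
        rw [hAdj_lr]
        subst hu; subst hv
        simpa using hg2 x
      | Sum.inr x, Sum.inl a =>
        simp only [hf, Sum.elim_inl, Sum.elim_inr, id] at hu hv
        rw [SimpleGraph.adj_comm, hAdj_lr]
        subst hu; subst hv
        simpa using hg2 x
      | Sum.inr x, Sum.inr y => exact hAdj_rr x y
    have hle : colWeight w P ≤ s * ℓ + ℓ := by
      rw [hP, colWeight_fiberPart]
      have hbound : ∀ i : Fin s,
          (univ.filter fun v => f v = i).sup w ≤ ℓ + (if i ∈ F then 1 else 0) := by
        intro i
        apply Finset.sup_le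
        intro v hv
        simp only [mem_filter, mem_univ, true_and] at hv
        match v with
        | Sum.inl a => simp [hw]
        | Sum.inr x =>
          simp only [hf, Sum.elim_inr] at hv
          have : i ∈ F := hv ▸ hg1 x
          simp [hw, this]
      calc ∑ i : Fin s, (univ.filter fun v => f v = i).sup w
          ≤ ∑ i : Fin s, (ℓ + (if i ∈ F then 1 else 0)) := Finset.sum_le_sum fun i _ => hbound i
        _ = s * ℓ + ∑ i : Fin s, (if i ∈ F then 1 else 0) := by
            rw [Finset.sum_add_distrib, Finset.sum_const, Finset.card_univ, Fintype.card_fin,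
              smul_eq_mul]
        _ = s * ℓ + F.card := by
            congr 1
            rw [Finset.sum_ite_mem, Finset.univ_inter, Finset.sum_const, smul_eq_mul, mul_one]
        _ ≤ s * ℓ + ℓ := by omega
    exact le_trans (Nat.sInf_le ⟨P, hproper, rfl⟩) hle
  · intro h
    have hne : { n | ∃ P : Finpartition (univ : Finset (Fin s ⊕ U)),
        IsProperColoring G P ∧ n = colWeight w P }.Nonempty := by
      refine ⟨colWeight w (fiberPart id Function.surjective_id), fiberPart id Function.surjective_id, ?_, rfl⟩
      intro T hT u hu v hv
      rw [fiberPart_parts] at hT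
      simp only [mem_image, mem_univ, true_and] at hT
      obtain ⟨i, rfl⟩ := hT
      simp only [mem_filter, mem_univ, true_and, id] at hu hv
      subst hu; subst hv
      exact G.irrefl
    obtain ⟨P, hproper, hEq⟩ := Nat.sInf_mem hne
    rw [hEq] at h; clear hEq hne
    -- parts containing each clique vertex
    set pt : Fin s → Finset (Fin s ⊕ U) := fun i => P.part (Sum.inl i) with hpt
    have hptmem : ∀ i, pt i ∈ P.parts := fun i => P.part_mem.2 (mem_univ _)
    have hptself : ∀ i, Sum.inl i ∈ pt i := fun i => P.mem_part (mem_univ _)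
    have hinj : Function.Injective pt := by
      intro i j hij
      by_contra hne'
      exact hproper _ (hptmem i) _ (hptself i) _ (hij ▸ hptself j)
        ((hAdj_ll i j).2 hne')
    set Im : Finset (Finset (Fin s ⊕ U)) := univ.image pt with hIm
    have hImsub : Im ⊆ P.parts := by
      intro T hT
      simp only [hIm, mem_image, mem_univ, true_and] at hT
      obtain ⟨i, rfl⟩ := hT
      exact hptmem i
    set F : Finset (Fin s) := univ.filter (fun i => ∃ x : U, Sum.inr x ∈ pt i) with hF
    have hsum1 : s * ℓ + F.card ≤ ∑ T ∈ Im, T.sup w := by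
      rw [hIm, Finset.sum_image (fun i _ j _ h => hinj h)]
      have hbound : ∀ i : Fin s, ℓ + (if i ∈ F then 1 else 0) ≤ (pt i).sup w := by
        intro i
        by_cases hi : i ∈ F
        · obtain ⟨x, hx⟩ : ∃ x : U, Sum.inr x ∈ pt i := by simpa [hF] using hi
          have h1 : ℓ + 1 ≤ (pt i).sup w := Finset.le_sup (f := w) hx
          simpa [hi] using h1
        · have h1 : ℓ ≤ (pt i).sup w := Finset.le_sup (f := w) (hptself i)
          simpa [hi] using h1
      calc s * ℓ + F.card = ∑ i : Fin s, (ℓ + (if i ∈ F then 1 else 0)) := by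
            rw [Finset.sum_add_distrib, Finset.sum_const, Finset.card_univ, Fintype.card_fin,
              smul_eq_mul]
            congr 1
            rw [Finset.sum_ite_mem, Finset.univ_inter, Finset.sum_const, smul_eq_mul, mul_one]
        _ ≤ ∑ i : Fin s, (pt i).sup w := Finset.sum_le_sum fun i _ => hbound i
    have hsum2 : (P.parts \ Im).card * (ℓ + 1) ≤ ∑ T ∈ P.parts \ Im, T.sup w := by
      rw [← smul_eq_mul]
      apply Finset.card_nsmul_le_sum
      intro T hT
      rw [mem_sdiff] at hT
      obtain ⟨hT1, hT2⟩ := hT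
      obtain ⟨v, hv⟩ := P.nonempty_of_mem_parts hT1
      match v with
      | Sum.inl i =>
        exfalso
        apply hT2
        have : T = pt i := P.eq_of_mem_parts hT1 (hptmem i) hv (hptself i)
        rw [hIm, mem_image]
        exact ⟨i, mem_univ i, this.symm⟩
      | Sum.inr x =>
        have := Finset.le_sup (f := w) hv
        simpa [hw] using this
    have htotal : s * ℓ + F.card + (P.parts \ Im).card * (ℓ + 1) ≤ s * ℓ + ℓ := by
      calc s * ℓ + F.card + (P.parts \ Im).card * (ℓ + 1)
          ≤ ∑ T ∈ Im, T.sup w + ∑ T ∈ P.parts \ Im, T.sup w := Nat.add_le_add hsum1 hsum2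
        _ = ∑ T ∈ P.parts, T.sup w := by
            rw [add_comm, Finset.sum_sdiff hImsub]
        _ ≤ s * ℓ + ℓ := h
    have hD : (P.parts \ Im) = ∅ := by
      by_contra hD
      have : 1 ≤ (P.parts \ Im).card := Nat.one_le_iff_ne_zero.2 (fun hc => hD (card_eq_zero.1 hc))
      nlinarith
    have hFcard : F.card ≤ ℓ := by omega
    refine ⟨F, hFcard, ?_⟩
    intro x
    have hxmem : Sum.inr x ∈ P.part (Sum.inr x) := P.mem_part (mem_univ _)
    have hpartmem : P.part (Sum.inr x) ∈ Im := by
      have : P.part (Sum.inr x) ∈ P.parts := P.part_mem.2 (mem_univ _)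
      by_contra hc
      have : P.part (Sum.inr x) ∈ P.parts \ Im := mem_sdiff.2 ⟨this, hc⟩
      rw [hD] at this
      exact absurd this (notMem_empty _)
    simp only [hIm, mem_image, mem_univ, true_and] at hpartmem
    obtain ⟨i, hi⟩ := hpartmem
    have hxpt : Sum.inr x ∈ pt i := hi ▸ hxmem
    have hiF : i ∈ F := by
      rw [hF, mem_filter]
      exact ⟨mem_univ i, x, hxpt⟩
    refine ⟨i, hiF, ?_⟩
    have hnadj := hproper _ (hptmem i) _ (hptself i) _ hxpt
    rw [hAdj_lr] at hnadj
    exact not_not.1 hnadj
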